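/- Let n be a positive integer, let ū ∈ 𝔽₂ⁿ be nonzero, and let b̄ ∈ 𝔽₂ⁿ. If b̄_i = 0 for all i < n(ū) and b̄_{n(ū)} = 1, then μ({g ∈ (1,2] : Ḡ(g)·ū = b̄}) = 2^{−(n − n(ū))}; otherwise μ({g ∈ (1,2] : Ḡ(g)·ū = b̄}) = 0. -/

import Mathlib

open MeasureTheory Matrix

/-- The `j`-th binary digit of a real number `g`, viewed in `𝔽₂`:
`[g]_j = ⌊2^j g⌋ − 2⌊2^{j−1} g⌋`. -/
noncomputable def binDigit (g : ℝ) (j : ℕ) : ZMod 2 :=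
  ((⌊(2:ℝ) ^ (j : ℤ) * g⌋ - 2 * ⌊(2:ℝ) ^ ((j : ℤ) - 1) * g⌋ : ℤ) : ZMod 2)

/-- The `n × n` lower-triangular Toeplitz matrix over `𝔽₂` whose `(i,j)` entry
equals `[g]_{i−j}` for `j ≤ i` and `0` for `i < j`. -/
noncomputable def Gmat (n : ℕ) (g : ℝ) : Matrix (Fin n) (Fin n) (ZMod 2) :=
  fun i j => if (j : ℕ) ≤ (i : ℕ) then binDigit g ((i : ℕ) - (j : ℕ)) else 0

/-- integer version of the binary digit -/
noncomputable def ibit (g : ℝ) (j : ℕ) : ℤ :=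
  ⌊(2:ℝ) ^ (j : ℤ) * g⌋ - 2 * ⌊(2:ℝ) ^ ((j : ℤ) - 1) * g⌋

lemma binDigit_eq_cast (g : ℝ) (j : ℕ) : binDigit g j = ((ibit g j : ℤ) : ZMod 2) := rfl

lemma ibit_bounds (g : ℝ) (j : ℕ) : 0 ≤ ibit g j ∧ ibit g j ≤ 1 := by
  have h2 : (2:ℝ) ^ (j:ℤ) * g = 2 * ((2:ℝ) ^ ((j:ℤ)-1) * g) := by
    rw [show (j:ℤ) = ((j:ℤ)-1) + 1 by ring, zpow_add_one₀ (by norm_num : (2:ℝ) ≠ 0)]; ring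
  set y := (2:ℝ) ^ ((j:ℤ)-1) * g with hy
  unfold ibit
  rw [← hy, h2]
  have h1 : (2*⌊y⌋ : ℤ) ≤ ⌊2*y⌋ := Int.le_floor.mpr (by push_cast; linarith [Int.floor_le y])
  have h3 : ⌊2*y⌋ < 2*⌊y⌋ + 2 := Int.floor_lt.mpr (by push_cast; linarith [Int.lt_floor_add_one y])
  omega

lemma binDigit_eq_iff (g : ℝ) (j : ℕ) (c : ZMod 2) :
    binDigit g j = c ↔ ibit g j = (c.val : ℤ) := by
  obtain ⟨h0, h1⟩ := ibit_bounds g j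
  have hib : ibit g j = 0 ∨ ibit g j = 1 := by omega
  have hc : c = 0 ∨ c = 1 := by fin_cases c <;> [exact Or.inl rfl; exact Or.inr rfl]
  rw [binDigit_eq_cast]
  rcases hib with h | h <;> rcases hc with rfl | rfl <;> rw [h] <;> simp <;> decide

lemma binDigit_zero (g : ℝ) (hg : g ∈ Set.Ioo (1:ℝ) 2) : binDigit g 0 = 1 := by
  rw [binDigit_eq_iff]
  unfold ibit
  have e1 : ⌊(2:ℝ) ^ ((0:ℕ):ℤ) * g⌋ = 1 := by
    rw [show (2:ℝ) ^ ((0:ℕ):ℤ) * g = g by norm_num, Int.floor_eq_iff]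
    push_cast
    constructor <;> [linarith [hg.1]; linarith [hg.2]]
  have e2 : ⌊(2:ℝ) ^ (((0:ℕ):ℤ) - 1) * g⌋ = 0 := by
    rw [Int.floor_eq_iff]
    have h1 := hg.1; have h2 := hg.2
    have : (2:ℝ) ^ (((0:ℕ):ℤ) - 1) = 1/2 := by norm_num
    rw [this]
    push_cast
    constructor <;> nlinarith
  rw [e1, e2]
  decide

/-- doubling trick for shifted power sums -/
lemma sum_shift (f : ℕ → ℤ) (m : ℕ) :
    ∑ j ∈ Finset.Icc 1 m, 2^(m+1-j) * f j = 2 * ∑ j ∈ Finset.Icc 1 m, 2^(m-j) * f j := by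
  rw [Finset.mul_sum]
  apply Finset.sum_congr rfl
  intro j hj
  obtain ⟨hj1, hj2⟩ := Finset.mem_Icc.mp hj
  rw [show m+1-j = (m-j)+1 by omega, pow_succ]
  ring

lemma telescope (g : ℝ) (m : ℕ) :
    ∑ j ∈ Finset.Icc 1 m, 2^(m-j) * ibit g j = ⌊(2:ℝ) ^ (m:ℤ) * g⌋ - 2^m * ⌊g⌋ := by
  induction m with
  | zero => simp
  | succ m ih =>
    rw [Finset.sum_Icc_succ_top (by omega : 1 ≤ m + 1), sum_shift, ih]
    have : ibit g (m+1) = ⌊(2:ℝ) ^ ((m:ℤ)+1) * g⌋ - 2 * ⌊(2:ℝ) ^ (m:ℤ) * g⌋ := by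
      unfold ibit
      norm_num
    rw [show ((m+1:ℕ):ℤ) = (m:ℤ)+1 by push_cast; ring] at *
    rw [show m+1-(m+1) = 0 by omega, this]
    push_cast
    ring

lemma binrep_unique (m : ℕ) (a c : ℕ → ℤ) (ha : ∀ j, 0 ≤ a j ∧ a j ≤ 1)
    (hc : ∀ j, 0 ≤ c j ∧ c j ≤ 1)
    (h : ∑ j ∈ Finset.Icc 1 m, 2^(m-j) * a j = ∑ j ∈ Finset.Icc 1 m, 2^(m-j) * c j) :
    ∀ j, 1 ≤ j → j ≤ m → a j = c j := by
  induction m with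
  | zero => intro j h1 h2; omega
  | succ m ih =>
    rw [Finset.sum_Icc_succ_top (by omega : 1 ≤ m + 1),
        Finset.sum_Icc_succ_top (by omega : 1 ≤ m + 1), sum_shift, sum_shift,
        show m+1-(m+1) = 0 by omega] at h
    have htop : a (m+1) = c (m+1) := by
      have := ha (m+1); have := hc (m+1); omega
    have hrest : ∑ j ∈ Finset.Icc 1 m, 2^(m-j) * a j = ∑ j ∈ Finset.Icc 1 m, 2^(m-j) * c j := by
      omega
    intro j h1 h2
    rcases Nat.lt_or_ge j (m+1) with hj | hj
    · exact ih hrest j h1 (by omega)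
    · have : j = m+1 := by omega
      rw [this]; exact htop

lemma sum_bound (m : ℕ) (a : ℕ → ℤ) (ha : ∀ j, 0 ≤ a j ∧ a j ≤ 1) :
    0 ≤ ∑ j ∈ Finset.Icc 1 m, 2^(m-j) * a j ∧
      ∑ j ∈ Finset.Icc 1 m, 2^(m-j) * a j ≤ 2^m - 1 := by
  induction m with
  | zero => simp
  | succ m ih =>
    rw [Finset.sum_Icc_succ_top (by omega : 1 ≤ m + 1), sum_shift,
        show m+1-(m+1) = 0 by omega]
    have := ha (m+1)
    have h2 : (2:ℤ)^(m+1) = 2 * 2^m := by ring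
    omega

lemma measure_bits (m : ℕ) (d : ℕ → ZMod 2) :
    volume {g : ℝ | g ∈ Set.Ioo (1:ℝ) 2 ∧ ∀ t, 1 ≤ t → t ≤ m → binDigit g t = d t}
      = ENNReal.ofReal ((2:ℝ) ^ (-(m:ℤ))) := by
  set N : ℤ := 2^m + ∑ j ∈ Finset.Icc 1 m, 2^(m-j) * ((d j).val : ℤ) with hN
  have hval : ∀ j, 0 ≤ ((d j).val : ℤ) ∧ ((d j).val : ℤ) ≤ 1 := by
    intro j
    have := (d j).val_lt
    omega
  obtain ⟨hs0, hs1⟩ := sum_bound m (fun j => ((d j).val : ℤ)) hval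
  have hNlb : 2^m ≤ N := by omega
  have hNub : N + 1 ≤ 2^(m+1) := by
    have : (2:ℤ)^(m+1) = 2 * 2^m := by ring
    omega
  have hpow : (0:ℝ) < 2^m := by positivity
  set A : ℝ := (N : ℝ) / 2^m with hA
  set B : ℝ := ((N:ℝ) + 1) / 2^m with hB
  have hA1 : 1 ≤ A := by
    rw [hA, le_div_iff₀ hpow]
    calc (1:ℝ) * 2^m = ((2^m : ℤ) : ℝ) := by push_cast; ring
    _ ≤ (N:ℝ) := by exact_mod_cast hNlb
  have hB2 : B ≤ 2 := by
    rw [hB, div_le_iff₀ hpow]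
    calc ((N:ℝ) + 1) = ((N + 1 : ℤ) : ℝ) := by push_cast; ring
    _ ≤ ((2^(m+1) : ℤ) : ℝ) := by exact_mod_cast hNub
    _ = 2 * 2^m := by push_cast; ring
  -- key pointwise equivalence
  have hiff : ∀ g : ℝ, g ∈ Set.Ioo (1:ℝ) 2 →
      ((∀ t, 1 ≤ t → t ≤ m → binDigit g t = d t) ↔ ⌊(2:ℝ) ^ (m:ℤ) * g⌋ = N) := by
    intro g hg
    have hfl : ⌊g⌋ = 1 := by
      rw [Int.floor_eq_iff]
      push_cast
      exact ⟨le_of_lt hg.1, by linarith [hg.2]⟩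
    constructor
    · intro h
      have : ∀ j ∈ Finset.Icc 1 m, 2^(m-j) * ibit g j = 2^(m-j) * ((d j).val : ℤ) := by
        intro j hj
        obtain ⟨h1, h2⟩ := Finset.mem_Icc.mp hj
        rw [(binDigit_eq_iff g j (d j)).mp (h j h1 h2)]
      have := Finset.sum_congr rfl this
      rw [telescope, hfl] at this
      omega
    · intro h
      have hsum : ∑ j ∈ Finset.Icc 1 m, 2^(m-j) * ibit g j
          = ∑ j ∈ Finset.Icc 1 m, 2^(m-j) * ((d j).val : ℤ) := by
        rw [telescope, hfl, h]
        omega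
      intro t h1 h2
      rw [binDigit_eq_iff]
      exact binrep_unique m _ _ (fun j => ibit_bounds g j) hval hsum t h1 h2
  -- the set is the dyadic interval minus the point 1
  have hset : {g : ℝ | g ∈ Set.Ioo (1:ℝ) 2 ∧ ∀ t, 1 ≤ t → t ≤ m → binDigit g t = d t}
      = Set.Ico A B \ {1} := by
    ext g
    simp only [Set.mem_setOf_eq, Set.mem_diff, Set.mem_Ico, Set.mem_singleton_iff,
      Set.mem_Ioo]
    constructor
    · rintro ⟨hg, h⟩
      have hfloor := (hiff g hg).mp h
      have h1 : (N:ℝ) ≤ (2:ℝ) ^ (m:ℤ) * g := by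
        rw [← hfloor]; exact Int.floor_le _
      have h2 : (2:ℝ) ^ (m:ℤ) * g < (N:ℝ) + 1 := by
        rw [← hfloor]
        push_cast
        exact Int.lt_floor_add_one _
      have hz : (2:ℝ) ^ (m:ℤ) = 2^m := by
        rw [zpow_natCast]
      rw [hz] at h1 h2
      refine ⟨⟨?_, ?_⟩, by linarith [hg.1]⟩
      · rw [hA, div_le_iff₀ hpow]; linarith
      · rw [hB, lt_div_iff₀ hpow]; linarith
    · rintro ⟨⟨h1, h2⟩, hne⟩
      have hg1 : 1 < g := lt_of_le_of_ne (le_trans hA1 h1) (Ne.symm hne)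
      have hg2 : g < 2 := lt_of_lt_of_le h2 hB2
      have hg : g ∈ Set.Ioo (1:ℝ) 2 := ⟨hg1, hg2⟩
      refine ⟨hg, (hiff g hg).mpr ?_⟩
      have hz : (2:ℝ) ^ (m:ℤ) = 2^m := by rw [zpow_natCast]
      rw [hz, Int.floor_eq_iff]
      rw [div_le_iff₀ hpow] at h1
      rw [hB, lt_div_iff₀ hpow] at h2
      push_cast
      constructor <;> linarith
  rw [hset, measure_diff_null (Real.volume_singleton), Real.volume_Ico]
  congr 1
  rw [hB, hA, _root_.zpow_neg, zpow_natCast]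
  field_simp
  ring

/-- extend a vector on `Fin n` to `ℕ` by zero -/
def extv (n : ℕ) (v : Fin n → ZMod 2) : ℕ → ZMod 2 :=
  fun j => if h : j < n then v ⟨j, h⟩ else 0

/-- the uniquely determined digit sequence -/
noncomputable def dseq (c f : ℕ → ZMod 2) : ℕ → ZMod 2
  | t => c t + ∑ s ∈ (Finset.range (t-1)).attach,
      dseq c f (s+1) * f (t - s - 1)
  decreasing_by
    have := Finset.mem_range.mp s.2
    omega

lemma dseq_eq (c f : ℕ → ZMod 2) (t : ℕ) :
    dseq c f t = c t + ∑ s ∈ Finset.range (t-1), dseq c f (s+1) * f (t - s - 1) := by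
  rw [dseq]
  congr 1
  exact Finset.sum_attach (Finset.range (t-1)) (fun s => dseq c f (s+1) * f (t - s - 1))

/-- row evaluation of the Toeplitz product, as a sum over digits -/
lemma row_eval (n : ℕ) (g : ℝ) (u : Fin n → ZMod 2) (i : Fin n) :
    (Gmat n g *ᵥ u) i
      = ∑ s ∈ Finset.range ((i:ℕ)+1), binDigit g s * extv n u ((i:ℕ) - s) := by
  have h1 : (Gmat n g *ᵥ u) i
      = ∑ j ∈ Finset.range n,
          (if j ≤ (i:ℕ) then binDigit g ((i:ℕ) - j) else 0) * extv n u j := by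
    rw [mulVec, dotProduct, ← Fin.sum_univ_eq_sum_range
      (fun j => (if j ≤ (i:ℕ) then binDigit g ((i:ℕ) - j) else 0) * extv n u j) n]
    apply Finset.sum_congr rfl
    intro j _
    simp [Gmat, extv, j.isLt]
  rw [h1]
  have h2 : ∑ j ∈ Finset.range n,
        (if j ≤ (i:ℕ) then binDigit g ((i:ℕ) - j) else 0) * extv n u j
      = ∑ j ∈ Finset.range ((i:ℕ)+1), binDigit g ((i:ℕ) - j) * extv n u j := by
    rw [← Finset.sum_subset (Finset.range_subset_range.mpr i.isLt)]
    · apply Finset.sum_congr rfl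
      intro j hj
      have := Finset.mem_range.mp hj
      rw [if_pos (by omega : j ≤ (i:ℕ))]
    · intro j _ hj
      rw [if_neg (by simp at hj; omega), zero_mul]
  rw [h2, ← Finset.sum_range_reflect (fun s => binDigit g s * extv n u ((i:ℕ) - s)) ((i:ℕ)+1)]
  apply Finset.sum_congr rfl
  intro j hj
  have hj' := Finset.mem_range.mp hj
  congr 2 <;> omega

lemma extv_lt (n : ℕ) (v : Fin n → ZMod 2) (i : Fin n) : extv n v (i:ℕ) = v i := by
  simp [extv, i.isLt]

lemma row_zero (n : ℕ) (g : ℝ) (u : Fin n → ZMod 2) (k : Fin n)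
    (hk2 : ∀ i : Fin n, i < k → u i = 0) (i : Fin n) (hik : (i:ℕ) < (k:ℕ)) :
    (Gmat n g *ᵥ u) i = 0 := by
  rw [row_eval]
  apply Finset.sum_eq_zero
  intro s _
  have h1 : (i:ℕ) - s < (k:ℕ) := by omega
  have h2 : extv n u ((i:ℕ) - s) = 0 := by
    unfold extv
    split
    · exact hk2 _ (by rwa [Fin.lt_def])
    · rfl
  rw [h2, mul_zero]

lemma row_ge (n : ℕ) (g : ℝ) (u : Fin n → ZMod 2) (k : Fin n)
    (hk2 : ∀ i : Fin n, i < k → u i = 0) (H0 : binDigit g 0 = 1) (i : Fin n)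
    (hik : (k:ℕ) ≤ (i:ℕ)) :
    (Gmat n g *ᵥ u) i = extv n u (i:ℕ)
      + ∑ s ∈ Finset.range ((i:ℕ) - (k:ℕ)),
          binDigit g (s+1) * extv n u ((i:ℕ) - s - 1) := by
  rw [row_eval]
  have hsub : ∑ s ∈ Finset.range ((i:ℕ)+1), binDigit g s * extv n u ((i:ℕ) - s)
      = ∑ s ∈ Finset.range ((i:ℕ) - (k:ℕ) + 1), binDigit g s * extv n u ((i:ℕ) - s) := by
    refine (Finset.sum_subset (Finset.range_subset_range.mpr (by omega)) ?_).symm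
    intro s hs hs'
    have h1 := Finset.mem_range.mp hs
    have h2 : ¬ s < (i:ℕ) - (k:ℕ) + 1 := fun hh => hs' (Finset.mem_range.mpr hh)
    have h3 : (i:ℕ) - s < (k:ℕ) := by omega
    have h4 : extv n u ((i:ℕ) - s) = 0 := by
      unfold extv
      split
      · exact hk2 _ (by rwa [Fin.lt_def])
      · rfl
    rw [h4, mul_zero]
  rw [hsub, Finset.sum_range_succ']
  rw [H0]
  simp only [one_mul, Nat.sub_zero]
  rw [add_comm]
  have hss : ∀ s : ℕ, (i:ℕ) - (s+1) = (i:ℕ) - s - 1 := fun s => by omega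
  simp only [hss]

lemma extv_mk (n : ℕ) (v : Fin n → ZMod 2) (j : ℕ) (h : j < n) :
    extv n v j = v ⟨j, h⟩ := by simp [extv, h]

lemma sum_range_split {M : Type*} [AddCommMonoid M] (F : ℕ → M) (t : ℕ) (ht : 1 ≤ t) :
    ∑ s ∈ Finset.range t, F s = ∑ s ∈ Finset.range (t-1), F s + F (t-1) := by
  conv_lhs => rw [show t = (t-1)+1 by omega]
  exact Finset.sum_range_succ F (t-1)

lemma row_ge' (n : ℕ) (g : ℝ) (u : Fin n → ZMod 2) (k : Fin n)
    (hk2 : ∀ i : Fin n, i < k → u i = 0) (H0 : binDigit g 0 = 1)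
    (t : ℕ) (hin : (k:ℕ) + t < n) :
    (Gmat n g *ᵥ u) ⟨(k:ℕ)+t, hin⟩ = extv n u ((k:ℕ)+t)
      + ∑ s ∈ Finset.range t, binDigit g (s+1) * extv n u ((k:ℕ)+t-s-1) := by
  rw [row_ge n g u k hk2 H0 ⟨(k:ℕ)+t, hin⟩ (Nat.le_add_right _ _)]
  simp only [Nat.add_sub_cancel_left]

lemma alg1 : ∀ (x S A B1 : ZMod 2), A + (S + x * 1) = B1 → x = (B1 + A) + S := by decide

lemma alg2 : ∀ (S A B1 : ZMod 2), A + (S + ((B1 + A) + S) * 1) = B1 := by decide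

lemma key_equiv (n : ℕ) (g : ℝ) (u b : Fin n → ZMod 2) (k : Fin n) (hk1 : u k = 1)
    (hk2 : ∀ i : Fin n, i < k → u i = 0) (H0 : binDigit g 0 = 1) :
    Gmat n g *ᵥ u = b ↔
      ((∀ i : Fin n, i < k → b i = 0) ∧ b k = 1 ∧
        ∀ t, 1 ≤ t → t ≤ n - 1 - (k:ℕ) →
          binDigit g t = dseq (fun t => extv n b ((k:ℕ)+t) + extv n u ((k:ℕ)+t))
            (fun r => extv n u ((k:ℕ)+r)) t) := by
  set D := dseq (fun t => extv n b ((k:ℕ)+t) + extv n u ((k:ℕ)+t))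
    (fun r => extv n u ((k:ℕ)+r)) with hD
  have hUK : extv n u (k:ℕ) = 1 := by rw [extv_lt, hk1]
  have hKn : (k:ℕ) < n := k.isLt
  constructor
  · intro h
    have hrow : ∀ i : Fin n, (Gmat n g *ᵥ u) i = b i := fun i => congrFun h i
    refine ⟨?_, ?_, ?_⟩
    · intro i hik
      rw [← hrow i, row_zero n g u k hk2 i (by rwa [Fin.lt_def] at hik)]
    · have hk' := hrow k
      rw [row_ge n g u k hk2 H0 k le_rfl, Nat.sub_self, Finset.range_zero,
        Finset.sum_empty, add_zero, extv_lt, hk1] at hk'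
      exact hk'.symm
    · intro t
      induction t using Nat.strong_induction_on with
      | _ t ih =>
        intro ht1 ht2
        have hin : (k:ℕ) + t < n := by omega
        have hrow' := hrow ⟨(k:ℕ) + t, hin⟩
        rw [row_ge' n g u k hk2 H0 t hin] at hrow'
        have hsplit : ∑ s ∈ Finset.range t, binDigit g (s+1) * extv n u ((k:ℕ)+t-s-1)
            = ∑ s ∈ Finset.range (t-1), binDigit g (s+1) * extv n u ((k:ℕ)+t-s-1)
              + binDigit g ((t-1)+1) * extv n u ((k:ℕ)+t-(t-1)-1) :=
          sum_range_split _ t ht1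
        have hF : binDigit g ((t-1)+1) * extv n u ((k:ℕ)+t-(t-1)-1)
            = binDigit g t * 1 := by
          rw [show (t-1)+1 = t by omega, show (k:ℕ)+t-(t-1)-1 = (k:ℕ) by omega, hUK]
        have hb : b ⟨(k:ℕ)+t, hin⟩ = extv n b ((k:ℕ)+t) := (extv_mk n b _ hin).symm
        rw [hsplit, hF, hb] at hrow'
        have hDt : D t = (extv n b ((k:ℕ)+t) + extv n u ((k:ℕ)+t))
            + ∑ s ∈ Finset.range (t-1), D (s+1) * extv n u ((k:ℕ)+(t-s-1)) :=
          dseq_eq _ _ t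
        rw [hDt]
        have hsum : ∑ s ∈ Finset.range (t-1), D (s+1) * extv n u ((k:ℕ)+(t-s-1))
            = ∑ s ∈ Finset.range (t-1), binDigit g (s+1) * extv n u ((k:ℕ)+t-s-1) := by
          apply Finset.sum_congr rfl
          intro s hs
          have hs' := Finset.mem_range.mp hs
          rw [← ih (s+1) (by omega) (by omega) (by omega),
            show (k:ℕ)+(t-s-1) = (k:ℕ)+t-s-1 by omega]
        rw [hsum]
        exact alg1 _ _ _ _ hrow'
  · rintro ⟨hb0, hbk, hd⟩
    funext i
    rcases Nat.lt_trichotomy (i:ℕ) (k:ℕ) with hik | hik | hik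
    · rw [row_zero n g u k hk2 i hik]
      exact (hb0 i (by rwa [Fin.lt_def])).symm
    · have hik' : i = k := Fin.ext hik
      rw [hik', row_ge n g u k hk2 H0 k le_rfl, Nat.sub_self, Finset.range_zero,
        Finset.sum_empty, add_zero, extv_lt, hk1, hbk]
    · set t := (i:ℕ) - (k:ℕ) with ht
      have h1t : 1 ≤ t := by omega
      have htm : t ≤ n - 1 - (k:ℕ) := by have := i.isLt; omega
      have hin : (k:ℕ) + t < n := by have := i.isLt; omega
      have hieq : i = ⟨(k:ℕ)+t, hin⟩ := Fin.ext (by simp only []; omega)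
      rw [hieq, row_ge' n g u k hk2 H0 t hin]
      have hsplit : ∑ s ∈ Finset.range t, binDigit g (s+1) * extv n u ((k:ℕ)+t-s-1)
          = ∑ s ∈ Finset.range (t-1), binDigit g (s+1) * extv n u ((k:ℕ)+t-s-1)
            + binDigit g ((t-1)+1) * extv n u ((k:ℕ)+t-(t-1)-1) :=
        sum_range_split _ t h1t
      have hF : binDigit g ((t-1)+1) * extv n u ((k:ℕ)+t-(t-1)-1)
          = D t * 1 := by
        rw [show (t-1)+1 = t by omega, show (k:ℕ)+t-(t-1)-1 = (k:ℕ) by omega, hUK,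
          hd t h1t htm]
      have hsum : ∑ s ∈ Finset.range (t-1), binDigit g (s+1) * extv n u ((k:ℕ)+t-s-1)
          = ∑ s ∈ Finset.range (t-1), D (s+1) * extv n u ((k:ℕ)+(t-s-1)) := by
        apply Finset.sum_congr rfl
        intro s hs
        have hs' := Finset.mem_range.mp hs
        rw [hd (s+1) (by omega) (by omega),
          show (k:ℕ)+(t-s-1) = (k:ℕ)+t-s-1 by omega]
      have hDt : D t = (extv n b ((k:ℕ)+t) + extv n u ((k:ℕ)+t))
          + ∑ s ∈ Finset.range (t-1), D (s+1) * extv n u ((k:ℕ)+(t-s-1)) :=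
        dseq_eq _ _ t
      have hb : b ⟨(k:ℕ)+t, hin⟩ = extv n b ((k:ℕ)+t) := (extv_mk n b _ hin).symm
      rw [hsplit, hF, hsum, hb, hDt]
      exact alg2 _ _ _


/-- exact distribution of the image vector `Ḡ(g)ū` for `g`
ranging over `(1,2]` (used in the proof of Lemma 4 of the paper). Here `k` is
the least (0-based) index with `ū_k ≠ 0`, so that `n(ū) = k + 1` in the 1-based
indexing of the paper. -/
theorem stmt_9 (n : ℕ) (hn : 0 < n) (u : Fin n → ZMod 2) (hu : u ≠ 0)
    (k : Fin n) (hk1 : u k ≠ 0) (hk2 : ∀ i : Fin n, i < k → u i = 0)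
    (b : Fin n → ZMod 2) :
    volume {g : ℝ | g ∈ Set.Ioc (1:ℝ) 2 ∧ Gmat n g *ᵥ u = b} =
      if (∀ i : Fin n, i < k → b i = 0) ∧ b k = 1 then
        ENNReal.ofReal ((2:ℝ) ^ (-((n : ℤ) - ((k : ℕ) + 1))))
      else 0 := by
  have hk1' : u k = 1 := by
    have h01 : ∀ y : ZMod 2, y ≠ 0 → y = 1 := by decide
    exact h01 _ hk1
  have hIoo : volume {g : ℝ | g ∈ Set.Ioc (1:ℝ) 2 ∧ Gmat n g *ᵥ u = b}
      = volume {g : ℝ | g ∈ Set.Ioo (1:ℝ) 2 ∧ Gmat n g *ᵥ u = b} := by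
    apply le_antisymm
    · calc volume {g : ℝ | g ∈ Set.Ioc (1:ℝ) 2 ∧ Gmat n g *ᵥ u = b}
          ≤ volume ({g : ℝ | g ∈ Set.Ioo (1:ℝ) 2 ∧ Gmat n g *ᵥ u = b} ∪ {2}) := by
            apply measure_mono
            rintro g ⟨hg, h⟩
            rcases lt_or_eq_of_le hg.2 with h2 | h2
            · exact Or.inl ⟨⟨hg.1, h2⟩, h⟩
            · exact Or.inr h2
      _ ≤ volume {g : ℝ | g ∈ Set.Ioo (1:ℝ) 2 ∧ Gmat n g *ᵥ u = b} + volume {2} :=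
            measure_union_le _ _
      _ = volume {g : ℝ | g ∈ Set.Ioo (1:ℝ) 2 ∧ Gmat n g *ᵥ u = b} := by
            rw [Real.volume_singleton, add_zero]
    · exact measure_mono (fun g hg => ⟨Set.Ioo_subset_Ioc_self hg.1, hg.2⟩)
  split_ifs with hcond
  · have hset : {g : ℝ | g ∈ Set.Ioo (1:ℝ) 2 ∧ Gmat n g *ᵥ u = b}
        = {g : ℝ | g ∈ Set.Ioo (1:ℝ) 2 ∧ ∀ t, 1 ≤ t → t ≤ n - 1 - (k:ℕ) →
            binDigit g t = dseq (fun t => extv n b ((k:ℕ)+t) + extv n u ((k:ℕ)+t))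
              (fun r => extv n u ((k:ℕ)+r)) t} := by
      ext g
      simp only [Set.mem_setOf_eq]
      constructor
      · rintro ⟨hg, h⟩
        exact ⟨hg, ((key_equiv n g u b k hk1' hk2 (binDigit_zero g hg)).mp h).2.2⟩
      · rintro ⟨hg, h⟩
        exact ⟨hg, (key_equiv n g u b k hk1' hk2 (binDigit_zero g hg)).mpr
          ⟨hcond.1, hcond.2, h⟩⟩
    rw [hIoo, hset, measure_bits]
    congr 2
    have := k.isLt
    omega
  · rw [hIoo]
    have hset : {g : ℝ | g ∈ Set.Ioo (1:ℝ) 2 ∧ Gmat n g *ᵥ u = b} = ∅ := by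
      ext g
      simp only [Set.mem_setOf_eq, Set.mem_empty_iff_false, iff_false, not_and]
      intro hg h
      have := (key_equiv n g u b k hk1' hk2 (binDigit_zero g hg)).mp h
      exact hcond ⟨this.1, this.2.1⟩
    rw [hset, measure_empty]
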